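/- For integers M ≥ 1: if d is a positive integer with d ∤ 3^n, then there is no way to write L^n as a sum of finitely many terms each of the form d·L^n/3^n + O(L^{n−1}) or 0, for all sufficiently large L; consequently, a set whose translates each intersect every large cube x₀+[0,L)^n in either 0 or (d/3^n + O(1/L))·L^n points cannot tile ℤ^n when d ∤ 3^n. -/

import Mathlib

theorem stmt17 (n : ℕ) (hn : 1 ≤ n) (d : ℕ) (hd : 0 < d) (hdvd : ¬ d ∣ 3 ^ n)
    (C : ℝ) (hC : 0 < C) :
    ∃ L₀ : ℕ, ∀ L : ℕ, L₀ ≤ L →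
      ¬ ∃ m : ℕ, |(L : ℝ) ^ n - m * d * (L : ℝ) ^ n / 3 ^ n| ≤ C * m * (L : ℝ) ^ (n - 1) := by
  set T : ℝ := 3 ^ n with hT
  have hT0 : (0:ℝ) < T := by positivity
  have hT1 : (1:ℝ) ≤ T := by
    calc (1:ℝ) = 1^n := (one_pow n).symm
    _ ≤ 3^n := pow_le_pow_left₀ (by norm_num) (by norm_num) n
  refine ⟨⌈2*C*T^2 + 2*C*T⌉₊ + 1, fun L hL => ?_⟩
  rintro ⟨m, hm⟩
  set x : ℝ := (L:ℝ) with hxdef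
  have hx : 2*C*T^2 + 2*C*T + 1 ≤ x := by
    have h1 := Nat.le_ceil (2*C*T^2 + 2*C*T)
    have h2 : ((⌈2*C*T^2 + 2*C*T⌉₊ + 1 : ℕ) : ℝ) ≤ x := Nat.cast_le.mpr hL
    push_cast at h2
    linarith
  have hx0 : (0:ℝ) < x := by nlinarith
  have hm0 : (0:ℝ) ≤ (m:ℝ) := Nat.cast_nonneg m
  have hd1 : (1:ℝ) ≤ (d:ℝ) := by exact_mod_cast hd
  have hxn : x ^ n = x ^ (n-1) * x := by
    rw [← pow_succ]
    congr 1
    omega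
  have hxp : (0:ℝ) < x ^ (n-1) := pow_pos hx0 _
  -- reduce hm
  have hfac : x ^ n - m * d * x ^ n / T = x ^ (n-1) * (x - m * d * x / T) := by
    rw [hxn]; ring
  rw [hfac, abs_mul, abs_of_pos hxp] at hm
  have hm' : |x - m * d * x / T| ≤ C * m := by
    have := (mul_le_mul_iff_right₀ hxp).mp (by linarith [hm] : x^(n-1) * |x - m*d*x/T| ≤ x^(n-1) * (C * m))
    exact this
  -- now x - m*d*x/T = (x/T)*(T - m*d)
  have hfac2 : x - m * d * x / T = (x/T) * (T - m*d) := by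
    field_simp
  rw [hfac2, abs_mul, abs_of_pos (div_pos hx0 hT0)] at hm'
  -- |T - m*d| ≥ 1
  have hz : (3^n : ℤ) - m*d ≠ 0 := by
    intro h
    have h' : (m*d : ℕ) = 3^n := by exact_mod_cast (sub_eq_zero.mp h).symm
    exact hdvd ⟨m, by linarith [h', Nat.mul_comm m d]⟩
  have habs : 1 ≤ |T - (m:ℝ)*d| := by
    have he : T - (m:ℝ)*d = ((3^n - m*d : ℤ) : ℝ) := by push_cast [hT]; ring
    rw [he, ← Int.cast_abs]
    exact_mod_cast Int.one_le_abs hz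
  have key1 : x ≤ C * m * T := by
    have h1 : x/T * 1 ≤ x/T * |T - (m:ℝ)*d| :=
      mul_le_mul_of_nonneg_left habs (le_of_lt (div_pos hx0 hT0))
    have h2 : x/T ≤ C * m := by linarith
    calc x = x/T * T := by field_simp
    _ ≤ C * m * T := mul_le_mul_of_nonneg_right h2 hT0.le
  have key2 : x * ((m:ℝ)*d) - x * T ≤ C * m * T := by
    have h1 : (m:ℝ)*d - T ≤ |T - (m:ℝ)*d| := by
      rw [abs_sub_comm]; exact le_abs_self _
    have h2 : x/T * ((m:ℝ)*d - T) ≤ x/T * |T - (m:ℝ)*d| :=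
      mul_le_mul_of_nonneg_left h1 (le_of_lt (div_pos hx0 hT0))
    have h3 : x/T * ((m:ℝ)*d - T) ≤ C * m := by linarith
    have h4 := mul_le_mul_of_nonneg_right h3 hT0.le
    have h5 : x/T * ((m:ℝ)*d - T) * T = x * ((m:ℝ)*d) - x * T := by
      field_simp
    linarith [h5 ▸ h4]
  -- derive m ≤ 2T
  have hmd : x * (m:ℝ) ≤ x * ((m:ℝ)*d) := by nlinarith [mul_nonneg (mul_nonneg hx0.le hm0) (sub_nonneg.mpr hd1)]
  have hm2T : (m:ℝ) ≤ 2*T := by nlinarith [mul_nonneg hC.le (mul_nonneg hT0.le hT0.le)]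
  nlinarith [mul_le_mul_of_nonneg_right hm2T (mul_pos hC hT0).le]
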